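/- arXiv:1203.5762 — 6 statements merged into one kernel-verified Lean document; each statement's English description precedes it below -/
import Mathlib

section
/- Define the modified Bessel function of order zero by I₀(y) = (1/(2π)) ∫_{−π}^{π} exp(y·cos θ) dθ for y ∈ ℝ, and the first-order Marcum Q function by Q₁(α, β) = ∫_{β}^{∞} x · exp(−(x² + α²)/2) · I₀(α·x) dx for α ≥ 0, β ≥ 0. Then for all real r > 0, c₀ > 0 and every complex number h_c, ∫_{{h ∈ ℂ : |h| ≥ c₀}} exp(−r·|h − h_c|²) dh = (π/r) · Q₁(√(2r)·|h_c|, √(2r)·c₀). -/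
open MeasureTheory Set

/-- The modified Bessel function of order zero:
`I₀(y) = (1/(2π)) ∫_{−π}^{π} exp(y cos θ) dθ`. -/
noncomputable def besselI0 (y : ℝ) : ℝ :=
  (1 / (2 * Real.pi)) * ∫ θ in (-Real.pi)..Real.pi, Real.exp (y * Real.cos θ)

/-- The first-order Marcum Q function:
`Q₁(α, β) = ∫_{β}^{∞} x exp(−(x² + α²)/2) I₀(α x) dx`. -/
noncomputable def marcumQ1 (α β : ℝ) : ℝ :=
  ∫ x in Set.Ioi β, x * Real.exp (-(x ^ 2 + α ^ 2) / 2) * besselI0 (α * x)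

lemma integral_Ioo_exp_cos (c φ : ℝ) :
    ∫ θ in Ioo (-Real.pi) Real.pi, Real.exp (c * Real.cos (θ - φ)) =
      2 * Real.pi * besselI0 c := by
  have hpi : (-Real.pi : ℝ) ≤ Real.pi := by linarith [Real.pi_pos]
  have hper : Function.Periodic (fun θ => Real.exp (c * Real.cos θ)) (2 * Real.pi) := by
    intro x; simp [Real.cos_periodic x]
  have h1 : ∫ θ in Ioo (-Real.pi) Real.pi, Real.exp (c * Real.cos (θ - φ)) =
      ∫ θ in (-Real.pi)..Real.pi, Real.exp (c * Real.cos (θ - φ)) := by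
    rw [intervalIntegral.integral_of_le hpi, integral_Ioc_eq_integral_Ioo]
  rw [h1, intervalIntegral.integral_comp_sub_right (fun θ => Real.exp (c * Real.cos θ)) φ]
  have h2 : (-Real.pi - φ : ℝ) + 2 * Real.pi = Real.pi - φ := by ring
  have h3 : (-Real.pi : ℝ) + 2 * Real.pi = Real.pi := by ring
  rw [← h2, hper.intervalIntegral_add_eq (-Real.pi - φ) (-Real.pi), h3, besselI0]
  have : (2 * Real.pi) ≠ 0 := by positivity
  field_simp

lemma integrable_mul_exp_shift {r a : ℝ} (hr : 0 < r) :
    Integrable (fun x : ℝ => x * Real.exp (-r * (x - a) ^ 2)) := by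
  have h1 := (integrable_mul_exp_neg_mul_sq hr).comp_sub_right a
  have h2 := ((integrable_exp_neg_mul_sq hr).comp_sub_right a).const_mul a
  refine (h1.add h2).congr (Filter.Eventually.of_forall fun x => ?_)
  simp only [Pi.add_apply]; ring

lemma abs_sq_polar (h_c : ℂ) (ρ θ : ℝ) :
    ‖Complex.polarCoord.symm (ρ, θ) - h_c‖ ^ 2 =
      ρ ^ 2 + (‖h_c‖) ^ 2
        - 2 * ρ * ‖h_c‖ * Real.cos (θ - Complex.arg h_c) := by
  have hx : ‖h_c‖ * Real.cos (Complex.arg h_c) = h_c.re :=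
    Complex.norm_mul_cos_arg h_c
  have hy : ‖h_c‖ * Real.sin (Complex.arg h_c) = h_c.im :=
    Complex.norm_mul_sin_arg h_c
  have ha2 : h_c.re ^ 2 + h_c.im ^ 2 = ‖h_c‖ ^ 2 := by
    rw [Complex.sq_norm, Complex.normSq_apply]; ring
  rw [Complex.sq_norm, Complex.normSq_apply, Real.cos_sub]
  simp only [Complex.polarCoord_symm_apply, Complex.sub_re, Complex.sub_im,
    Complex.add_re, Complex.add_im, Complex.mul_re, Complex.mul_im,
    Complex.ofReal_re, Complex.ofReal_im, Complex.I_re, Complex.I_im]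
  linear_combination ρ^2 * Real.sin_sq_add_cos_sq θ + 2*ρ*Real.cos θ * hx +
    2*ρ*Real.sin θ * hy + ha2


/-- closed form of the exterior Gaussian integral via the Marcum Q
function, Lemma 1 of the paper with the corrected constant `π/r`. -/
theorem exterior_gaussian_integral_eq_marcumQ1
    (r c₀ : ℝ) (hr : 0 < r) (hc₀ : 0 < c₀) (h_c : ℂ) :
    (∫ h in {h : ℂ | c₀ ≤ ‖h‖},
        Real.exp (-r * (‖h - h_c‖) ^ 2)) =
      (Real.pi / r) *
        marcumQ1 (Real.sqrt (2 * r) * ‖h_c‖) (Real.sqrt (2 * r) * c₀) := by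
  set a : ℝ := ‖h_c‖ with ha_def
  set φ : ℝ := Complex.arg h_c with hφ_def
  set s : ℝ := Real.sqrt (2 * r) with hs_def
  have ha : 0 ≤ a := norm_nonneg h_c
  have hs : 0 < s := Real.sqrt_pos.mpr (by linarith)
  have hs2 : s ^ 2 = 2 * r := Real.sq_sqrt (by linarith)
  set S : Set ℂ := {h : ℂ | c₀ ≤ ‖h‖} with hS_def
  have hSmeas : MeasurableSet S :=
    measurableSet_le measurable_const continuous_norm.measurable
  set f : ℂ → ℝ := fun h => Real.exp (-r * (‖h - h_c‖) ^ 2) with hf_def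
  set F : ℝ × ℝ → ℝ := fun p =>
    ((Ici c₀).indicator (fun x : ℝ => x) p.1 * Real.exp (-r * (p.1 ^ 2 + a ^ 2))) *
      Real.exp (2 * r * a * p.1 * Real.cos (p.2 - φ)) with hF_def
  set T : ℝ := ∫ ρ in Ioi c₀, ρ * Real.exp (-r * (ρ ^ 2 + a ^ 2)) * besselI0 (2 * r * a * ρ)
    with hT_def
  -- Step 1 : polar coordinates
  have step1 : (∫ h in S, f h) = ∫ p in Ioi (0:ℝ) ×ˢ Ioo (-Real.pi) Real.pi, F p := by
    rw [← integral_indicator hSmeas, ← Complex.integral_comp_polarCoord_symm (S.indicator f)]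
    apply setIntegral_congr_fun (measurableSet_Ioi.prod measurableSet_Ioo)
    rintro ⟨ρ, θ⟩ ⟨hρ, hθ⟩
    simp only [mem_Ioi] at hρ
    have habs : ‖Complex.polarCoord.symm (ρ, θ)‖ = ρ := by
      rw [Complex.norm_polarCoord_symm, abs_of_pos hρ]
    simp only [smul_eq_mul, hF_def]
    by_cases hc : c₀ ≤ ρ
    · rw [Set.indicator_of_mem (show Complex.polarCoord.symm (ρ, θ) ∈ S by
        simp only [hS_def, Set.mem_setOf_eq, habs]; exact hc) f,
        Set.indicator_of_mem (show ρ ∈ Ici c₀ from hc)]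
      rw [hf_def]
      simp only
      rw [abs_sq_polar, ← ha_def, ← hφ_def,
        mul_assoc ρ (Real.exp (-r * (ρ ^ 2 + a ^ 2)))
          (Real.exp (2 * r * a * ρ * Real.cos (θ - φ))), ← Real.exp_add]
      congr 2
      ring
    · rw [Set.indicator_of_notMem (show Complex.polarCoord.symm (ρ, θ) ∉ S by
        simp only [hS_def, Set.mem_setOf_eq, habs]; exact hc),
        Set.indicator_of_notMem (show ρ ∉ Ici c₀ from hc)]
      simp
  -- Integrability for Fubini
  have hFmeas : Measurable F := by
    apply Measurable.mul
    · exact ((measurable_id.indicator measurableSet_Ici).comp measurable_fst).mul (by fun_prop)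
    · fun_prop
  have hFint : IntegrableOn F (Ioi (0:ℝ) ×ˢ Ioo (-Real.pi) Real.pi)
      (volume.prod volume) := by
    have hB : Integrable (fun p : ℝ × ℝ => p.1 * Real.exp (-r * (p.1 - a) ^ 2) * 1)
        ((volume.restrict (Ioi (0:ℝ))).prod (volume.restrict (Ioo (-Real.pi) Real.pi))) :=
      Integrable.mul_prod ((integrable_mul_exp_shift hr).restrict) (integrable_const 1)
    rw [Measure.prod_restrict] at hB
    refine Integrable.mono' hB (hFmeas.aestronglyMeasurable.restrict) ?_
    rw [ae_restrict_iff' (measurableSet_Ioi.prod measurableSet_Ioo)]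
    refine Filter.Eventually.of_forall ?_
    rintro ⟨ρ, θ⟩ ⟨hρ, hθ⟩
    simp only [mem_Ioi] at hρ
    have h0 : 0 ≤ (Ici c₀).indicator (fun x : ℝ => x) ρ :=
      Set.indicator_nonneg (fun x hx => le_trans hc₀.le hx) ρ
    have hle : (Ici c₀).indicator (fun x : ℝ => x) ρ ≤ ρ := by
      by_cases h : ρ ∈ Ici c₀
      · simp [h]
      · simp [h, hρ.le]
    have hE2 : Real.exp (2 * r * a * ρ * Real.cos (θ - φ)) ≤ Real.exp (2 * r * a * ρ) := by
      apply Real.exp_le_exp.mpr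
      have h1 : Real.cos (θ - φ) ≤ 1 := Real.cos_le_one _
      nlinarith [mul_nonneg (mul_nonneg (by linarith : (0:ℝ) ≤ 2 * r) ha) hρ.le]
    have hmain : F (ρ, θ) ≤ ρ * Real.exp (-r * (ρ - a) ^ 2) * 1 := by
      have hme : Real.exp (-r * (ρ ^ 2 + a ^ 2)) * Real.exp (2 * r * a * ρ) =
          Real.exp (-r * (ρ - a) ^ 2) := by
        rw [← Real.exp_add]; congr 1; ring
      calc F (ρ, θ) ≤ (ρ * Real.exp (-r * (ρ ^ 2 + a ^ 2))) *
            Real.exp (2 * r * a * ρ) := by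
            apply mul_le_mul
            · exact mul_le_mul_of_nonneg_right hle (Real.exp_nonneg _)
            · exact hE2
            · exact Real.exp_nonneg _
            · exact mul_nonneg hρ.le (Real.exp_nonneg _)
        _ = ρ * Real.exp (-r * (ρ - a) ^ 2) * 1 := by
            rw [mul_assoc, hme, mul_one]
    have hFnn : 0 ≤ F (ρ, θ) :=
      mul_nonneg (mul_nonneg h0 (Real.exp_nonneg _)) (Real.exp_nonneg _)
    calc ‖F (ρ, θ)‖ = F (ρ, θ) := by rw [Real.norm_eq_abs, abs_of_nonneg hFnn]
      _ ≤ ρ * Real.exp (-r * (ρ - a) ^ 2) * 1 := hmain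
  -- Step 2 : Fubini + inner integral
  have step2 : (∫ p in Ioi (0:ℝ) ×ˢ Ioo (-Real.pi) Real.pi, F p) = 2 * Real.pi * T := by
    rw [Measure.volume_eq_prod, setIntegral_prod F hFint]
    have hinner : ∀ ρ : ℝ, (∫ θ in Ioo (-Real.pi) Real.pi, F (ρ, θ)) =
        (Ici c₀).indicator
          (fun x : ℝ => 2 * Real.pi * (x * Real.exp (-r * (x ^ 2 + a ^ 2)) *
            besselI0 (2 * r * a * x))) ρ := by
      intro ρ
      rw [show (fun θ => F (ρ, θ)) = fun θ =>
          ((Ici c₀).indicator (fun x : ℝ => x) ρ * Real.exp (-r * (ρ ^ 2 + a ^ 2))) *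
            Real.exp (2 * r * a * ρ * Real.cos (θ - φ)) from rfl,
        MeasureTheory.integral_const_mul _ _, integral_Ioo_exp_cos (2 * r * a * ρ) φ]
      by_cases h : ρ ∈ Ici c₀
      · rw [Set.indicator_of_mem h, Set.indicator_of_mem h]; ring
      · rw [Set.indicator_of_notMem h, Set.indicator_of_notMem h]; simp
    rw [show (fun ρ => ∫ θ in Ioo (-Real.pi) Real.pi, F (ρ, θ)) = fun ρ =>
        (Ici c₀).indicator (fun x : ℝ => 2 * Real.pi * (x * Real.exp (-r * (x ^ 2 + a ^ 2)) *
          besselI0 (2 * r * a * x))) ρ from funext hinner]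
    rw [setIntegral_indicator measurableSet_Ici,
      (show Ioi (0:ℝ) ∩ Ici c₀ = Ici c₀ from
        Set.inter_eq_right.mpr fun x hx => lt_of_lt_of_le hc₀ hx),
      MeasureTheory.integral_Ici_eq_integral_Ioi, MeasureTheory.integral_const_mul _ _, hT_def]
  -- Step 3 : the right-hand side
  have step3 : (Real.pi / r) * marcumQ1 (s * a) (s * c₀) = 2 * Real.pi * T := by
    rw [marcumQ1]
    have hsub := MeasureTheory.integral_comp_mul_left_Ioi
      (fun x => x * Real.exp (-(x ^ 2 + (s * a) ^ 2) / 2) * besselI0 (s * a * x)) c₀ hs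
    simp only [smul_eq_mul] at hsub
    have h5 : (∫ x in Ioi (s * c₀),
        x * Real.exp (-(x ^ 2 + (s * a) ^ 2) / 2) * besselI0 (s * a * x)) =
        s * ∫ x in Ioi c₀,
          (s * x) * Real.exp (-((s * x) ^ 2 + (s * a) ^ 2) / 2) * besselI0 (s * a * (s * x)) := by
      rw [hsub, ← mul_assoc, mul_inv_cancel₀ hs.ne', one_mul]
    have hpt : (fun x : ℝ => (s * x) * Real.exp (-((s * x) ^ 2 + (s * a) ^ 2) / 2) *
        besselI0 (s * a * (s * x))) = fun x : ℝ =>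
        s * (x * Real.exp (-r * (x ^ 2 + a ^ 2)) * besselI0 (2 * r * a * x)) := by
      funext x
      have e1 : -((s * x) ^ 2 + (s * a) ^ 2) / 2 = -r * (x ^ 2 + a ^ 2) := by
        linear_combination (-(x ^ 2 + a ^ 2) / 2) * hs2
      have e2 : s * a * (s * x) = 2 * r * a * x := by
        linear_combination (a * x) * hs2
      rw [e1, e2]; ring
    rw [h5, hpt, MeasureTheory.integral_const_mul _ _, ← hT_def]
    have hr' : r ≠ 0 := hr.ne'
    field_simp
    linear_combination T * hs2
  exact step1.trans (step2.trans step3.symm)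
end

section
/- For all real r > 0 and c₀ > 0 and every complex number h_c with |h_c| < c₀, the following upper bound holds: ∫_{{h ∈ ℂ : |h| ≥ c₀}} exp(−r·|h − h_c|²) dh ≤ (π/r) · (c₀/(c₀ − |h_c|)) · exp(−r·(c₀ − |h_c|)²). -/
open MeasureTheory Set Real

lemma integrable_rexp_neg_mul_sq_abs {b : ℝ} (hb : 0 < b) :
    Integrable (fun v : ℂ => Real.exp (-b * ‖v‖ ^ 2)) := by
  have h := (GaussianFourier.integrable_cexp_neg_mul_sq_norm_add (b := (b:ℂ))
    (by simpa using hb) 0 (0:ℂ)).norm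
  refine h.congr (Filter.Eventually.of_forall fun v => ?_)
  simp [Complex.norm_exp, ← Complex.ofReal_pow]

/-- tail upper bound of Lemma 1 of the paper, with the corrected
constant `π/r`: for `r > 0`, `c₀ > 0` and `|h_c| < c₀`,
`∫_{|h| ≥ c₀} exp(−r|h − h_c|²) dh ≤ (π/r) (c₀/(c₀ − |h_c|)) exp(−r(c₀ − |h_c|)²)`. -/
theorem exterior_gaussian_integral_le
    (r c₀ : ℝ) (hr : 0 < r) (hc₀ : 0 < c₀) (h_c : ℂ) (hhc : ‖h_c‖ < c₀) :
    (∫ h in {h : ℂ | c₀ ≤ ‖h‖},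
        Real.exp (-r * (‖h - h_c‖) ^ 2)) ≤
      (Real.pi / r) * (c₀ / (c₀ - ‖h_c‖)) *
        Real.exp (-r * (c₀ - ‖h_c‖) ^ 2) := by
  set a : ℝ := ‖h_c‖ with ha
  set δ : ℝ := c₀ - a with hδdef
  have ha0 : 0 ≤ a := norm_nonneg _
  have hδ : 0 < δ := by simp only [hδdef]; linarith
  set S : Set ℂ := {h : ℂ | c₀ ≤ ‖h‖} with hS
  have hSmeas : MeasurableSet S :=
    (isClosed_le continuous_const continuous_norm).measurableSet
  set g : ℂ → ℝ := fun h => Real.exp (-r * (‖h‖ - a) ^ 2) with hg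
  set f : ℂ → ℝ := fun h => Real.exp (-r * (‖h - h_c‖) ^ 2) with hf
  -- 1-d auxiliary facts
  set ψ : ℝ → ℝ := fun x => (x - a) * Real.exp (-r * (x - a) ^ 2) with hψ
  set F : ℝ → ℝ := fun x => -Real.exp (-r * (x - a) ^ 2) / (2 * r) with hF
  have hFderiv : ∀ x : ℝ, HasDerivAt F (ψ x) x := by
    intro x
    have h1 : HasDerivAt (fun x : ℝ => -r * (x - a) ^ 2) (-r * (2 * (x - a))) x := by
      have := ((hasDerivAt_id x).sub_const a).pow 2
      simpa [mul_comm] using this.const_mul (-r)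
    have h2 := (h1.exp).neg.div_const (2 * r)
    refine HasDerivAt.congr_deriv h2 ?_
    rw [div_eq_iff (by positivity)]
    simp only [hψ]
    ring
  have hFtend : Filter.Tendsto F Filter.atTop (nhds 0) := by
    have h0 : Filter.Tendsto (fun x : ℝ => (x - a) ^ 2) Filter.atTop Filter.atTop := by
      exact (Filter.tendsto_pow_atTop two_ne_zero).comp
        (Filter.tendsto_atTop_add_const_right _ (-a) Filter.tendsto_id) |>.congr
        (fun x => by simp [sub_eq_add_neg])
    have h1 : Filter.Tendsto (fun x : ℝ => -r * (x - a) ^ 2) Filter.atTop Filter.atBot :=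
      h0.const_mul_atTop_of_neg (by linarith)
    have h2 := ((Real.tendsto_exp_atBot.comp h1).neg).div_const (2 * r)
    simpa [hF, Function.comp] using h2
  have hψpos : ∀ x ∈ Ioi c₀, 0 ≤ ψ x := by
    intro x hx
    have : 0 ≤ x - a := by simp only [mem_Ioi] at hx; linarith
    positivity
  have hψint : IntegrableOn ψ (Ioi c₀) :=
    integrableOn_Ioi_deriv_of_nonneg' (fun x _ => hFderiv x) hψpos hFtend
  have hψval : ∫ x in Ioi c₀, ψ x = Real.exp (-r * δ ^ 2) / (2 * r) := by
    rw [integral_Ioi_of_hasDerivAt_of_nonneg' (fun x _ => hFderiv x) hψpos hFtend]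
    simp only [hF, hδdef]
    ring
  -- integrability of x * exp on Ioi c₀
  set χ : ℝ → ℝ := fun x => x * Real.exp (-r * (x - a) ^ 2) with hχ
  have hptwise : ∀ x ∈ Ioi c₀, χ x ≤ (c₀ / δ) * ψ x := by
    intro x hx
    simp only [mem_Ioi] at hx
    have hxpos : (0:ℝ) < x := lt_trans hc₀ hx
    have hkey : x * δ ≤ c₀ * (x - a) := by nlinarith
    have hexp : 0 < Real.exp (-r * (x - a) ^ 2) := Real.exp_pos _
    show x * Real.exp (-r * (x - a) ^ 2) ≤ c₀ / δ * ((x - a) * Real.exp (-r * (x - a) ^ 2))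
    rw [div_mul_eq_mul_div, le_div_iff₀ hδ]
    nlinarith [mul_le_mul_of_nonneg_right hkey hexp.le]
  have hχint : IntegrableOn χ (Ioi c₀) := by
    refine Integrable.mono' (hψint.const_mul (c₀ / δ)) ?_ ?_
    · exact (continuous_id.mul (Real.continuous_exp.comp (continuous_const.mul
        ((continuous_id.sub continuous_const).pow 2)))).aestronglyMeasurable.restrict
    · filter_upwards [ae_restrict_mem measurableSet_Ioi] with x hx
      rw [Real.norm_eq_abs, abs_of_nonneg (by
        have : (0:ℝ) < x := lt_trans hc₀ hx
        positivity)]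
      exact hptwise x hx
  have hI : ∫ x in Ioi c₀, χ x ≤ (c₀ / δ) * (Real.exp (-r * δ ^ 2) / (2 * r)) := by
    rw [← hψval, ← MeasureTheory.integral_const_mul]
    exact setIntegral_mono_on hχint (hψint.const_mul _) measurableSet_Ioi hptwise
  -- integrability of g on S
  have hgS : IntegrableOn g S := by
    refine Integrable.mono' ((integrable_rexp_neg_mul_sq_abs
      (show (0:ℝ) < r * (δ / c₀) ^ 2 by positivity)).restrict) ?_ ?_
    · exact (Real.continuous_exp.comp (continuous_const.mul
        ((continuous_norm.sub continuous_const).pow 2))).aestronglyMeasurable.restrict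
    · filter_upwards [ae_restrict_mem hSmeas] with h hh
      have hh' : c₀ ≤ ‖h‖ := hh
      rw [Real.norm_eq_abs, abs_of_nonneg (Real.exp_pos _).le, Real.exp_le_exp]
      have h1 : ‖h‖ * (δ / c₀) ≤ ‖h‖ - a := by
        rw [mul_comm, div_mul_eq_mul_div, div_le_iff₀ hc₀]
        nlinarith [mul_le_mul_of_nonneg_left hh' ha0]
      have h2 : 0 ≤ ‖h‖ * (δ / c₀) := by positivity
      nlinarith [mul_le_mul_of_nonneg_left (pow_le_pow_left₀ h2 h1 2) hr.le]
  -- integrability of f on S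
  have hfS : IntegrableOn f S := by
    refine Integrable.mono' hgS ?_ ?_
    · exact (Real.continuous_exp.comp (continuous_const.mul
        (((continuous_norm.comp (continuous_id.sub continuous_const)).pow 2)))).aestronglyMeasurable.restrict
    · filter_upwards [ae_restrict_mem hSmeas] with h hh
      have hh' : c₀ ≤ ‖h‖ := hh
      rw [Real.norm_eq_abs, abs_of_nonneg (Real.exp_pos _).le, Real.exp_le_exp]
      have h1 : ‖h‖ - a ≤ ‖h - h_c‖ := by
        simpa [ha] using norm_sub_norm_le h h_c
      have h2 : 0 ≤ ‖h‖ - a := by linarith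
      nlinarith [mul_le_mul_of_nonneg_left (pow_le_pow_left₀ h2 h1 2) hr.le]
  -- step 1: pointwise comparison of the two set integrals
  have step1 : (∫ h in S, f h) ≤ ∫ h in S, g h := by
    refine setIntegral_mono_on hfS hgS hSmeas ?_
    intro h hh
    have hh' : c₀ ≤ ‖h‖ := hh
    rw [hf, hg, Real.exp_le_exp]
    have h1 : ‖h‖ - a ≤ ‖h - h_c‖ := by
      simpa [ha] using norm_sub_norm_le h h_c
    have h2 : 0 ≤ ‖h‖ - a := by linarith
    nlinarith [mul_le_mul_of_nonneg_left (pow_le_pow_left₀ h2 h1 2) hr.le]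
  -- step 2: polar coordinates
  have step2 : (∫ h in S, g h) = (2 * Real.pi) * ∫ x in Ioi c₀, χ x := by
    set φ : ℝ → ℝ := fun x => (Ici c₀).indicator (fun x => Real.exp (-r * (x - a) ^ 2)) x with hφ
    have hind : S.indicator g = fun h : ℂ => φ (‖h‖) := by
      funext h
      simp only [hφ, hS, hg, Set.indicator_apply, mem_setOf_eq, mem_Ici]
    calc (∫ h in S, g h) = ∫ h : ℂ, S.indicator g h := (integral_indicator hSmeas).symm
      _ = ∫ h : ℂ, φ (‖h‖) := by rw [hind]
      _ = ∫ p in Ioi (0:ℝ) ×ˢ Ioo (-Real.pi) Real.pi, p.1 * φ |p.1| := by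
          rw [← Complex.integral_comp_polarCoord_symm, polarCoord_target]
          simp_rw [Complex.norm_polarCoord_symm, smul_eq_mul]
      _ = (∫ x in Ioi (0:ℝ), x * φ |x|) * ∫ _ in Ioo (-Real.pi) Real.pi, (1:ℝ) := by
          rw [← setIntegral_prod_mul, Measure.volume_eq_prod]
          simp_rw [mul_one]
      _ = (∫ x in Ioi (0:ℝ), x * φ |x|) * (2 * Real.pi) := by
          rw [setIntegral_const, smul_eq_mul, mul_one,
            Real.volume_real_Ioo_of_le (by linarith [Real.pi_pos] : -Real.pi ≤ Real.pi)]
          ring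
      _ = (∫ x in Ioi (0:ℝ), (Ici c₀).indicator χ x) * (2 * Real.pi) := by
          congr 1
          refine setIntegral_congr_fun measurableSet_Ioi fun x hx => ?_
          rw [abs_of_nonneg (le_of_lt hx)]
          simp only [hφ, hχ, Set.indicator_apply]
          split_ifs <;> simp
      _ = (∫ x in Ioi c₀, χ x) * (2 * Real.pi) := by
          rw [setIntegral_indicator measurableSet_Ici,
            show Ioi (0:ℝ) ∩ Ici c₀ = Ici c₀ from
              inter_eq_self_of_subset_right (fun x hx => lt_of_lt_of_le hc₀ hx),
            integral_Ici_eq_integral_Ioi]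
      _ = (2 * Real.pi) * ∫ x in Ioi c₀, χ x := by ring
  -- combine
  calc (∫ h in S, f h) ≤ ∫ h in S, g h := step1
    _ = (2 * Real.pi) * ∫ x in Ioi c₀, χ x := step2
    _ ≤ (2 * Real.pi) * ((c₀ / δ) * (Real.exp (-r * δ ^ 2) / (2 * r))) := by
        have h2π : (0:ℝ) ≤ 2 * Real.pi := by positivity
        exact mul_le_mul_of_nonneg_left hI h2π
    _ = (Real.pi / r) * (c₀ / δ) * Real.exp (-r * δ ^ 2) := by
        field_simp
end

section
/- Define the modified Bessel function of order zero by I₀(y) = (1/(2π)) ∫_{−π}^{π} exp(y·cos θ) dθ for y ∈ ℝ, and the first-order Marcum Q function by Q₁(α, β) = ∫_{β}^{∞} x · exp(−(x² + α²)/2) · I₀(α·x) dx. Then for all real numbers α, β with 0 ≤ α < β, Q₁(α, β) ≤ (β/(β − α)) · exp(−(β − α)²/2). -/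
open MeasureTheory Set

lemma besselI0_nonneg (y : ℝ) : 0 ≤ besselI0 y := by
  unfold besselI0
  have hπ := Real.pi_pos
  apply mul_nonneg (by positivity)
  apply intervalIntegral.integral_nonneg (by linarith)
  intro x _; positivity

lemma besselI0_le_exp {y : ℝ} (hy : 0 ≤ y) : besselI0 y ≤ Real.exp y := by
  unfold besselI0
  have hπ := Real.pi_pos
  have h : (∫ θ in (-Real.pi)..Real.pi, Real.exp (y * Real.cos θ))
      ≤ ∫ _ in (-Real.pi)..Real.pi, Real.exp y := by
    apply intervalIntegral.integral_mono_on (by linarith)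
    · exact (Real.continuous_exp.comp (continuous_const.mul Real.continuous_cos)).intervalIntegrable _ _
    · exact intervalIntegrable_const
    · intro x _
      exact Real.exp_le_exp.2 (by nlinarith [Real.cos_le_one x])
  rw [intervalIntegral.integral_const] at h
  calc (1 / (2 * Real.pi)) * ∫ θ in (-Real.pi)..Real.pi, Real.exp (y * Real.cos θ)
      ≤ (1 / (2 * Real.pi)) * ((Real.pi - -Real.pi) • Real.exp y) :=
        mul_le_mul_of_nonneg_left h (by positivity)
    _ = Real.exp y := by
        rw [smul_eq_mul]; field_simp; ring

/-- Simon–Alouini bound on the first-order Marcum Q function: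
for `0 ≤ α < β`, `Q₁(α, β) ≤ (β/(β − α)) exp(−(β − α)²/2)`. -/
theorem marcumQ1_le (α β : ℝ) (hα : 0 ≤ α) (hαβ : α < β) :
    marcumQ1 α β ≤ (β / (β - α)) * Real.exp (-(β - α) ^ 2 / 2) := by
  have hba : 0 < β - α := by linarith
  have hβ : 0 < β := lt_of_le_of_lt hα hαβ
  set c : ℝ := β / (β - α) with hc
  have hc0 : 0 < c := div_pos hβ hba
  -- derivative setup
  set G : ℝ → ℝ := fun x => -Real.exp (-(x - α) ^ 2 / 2) with hG
  set g : ℝ → ℝ := fun x => (x - α) * Real.exp (-(x - α) ^ 2 / 2) with hg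
  have hderiv : ∀ x ∈ Ici β, HasDerivAt G (g x) x := by
    intro x _
    have h1 : HasDerivAt (fun x : ℝ => -(x - α) ^ 2 / 2) (-(x - α)) x := by
      have h0 := (((hasDerivAt_id x).sub_const α).pow 2).neg.div_const 2
      refine h0.congr_deriv ?_
      simp only [id_eq]
      ring
    have h2 := (h1.exp).neg
    refine h2.congr_deriv ?_
    simp [hg]
    ring
  have gpos : ∀ x ∈ Ioi β, 0 ≤ g x := by
    intro x hx
    have : (0:ℝ) ≤ x - α := by simp at hx; linarith
    positivity
  have htend : Filter.Tendsto G Filter.atTop (nhds 0) := by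
    have h1 : Filter.Tendsto (fun x : ℝ => -(x - α) ^ 2 / 2) Filter.atTop Filter.atBot := by
      have h2 : Filter.Tendsto (fun x : ℝ => x - α) Filter.atTop Filter.atTop :=
        Filter.tendsto_atTop_add_const_right _ _ Filter.tendsto_id
      have h3 : Filter.Tendsto (fun x : ℝ => (x - α) ^ 2) Filter.atTop Filter.atTop :=
        (Filter.tendsto_pow_atTop two_ne_zero).comp h2
      have h4 : Filter.Tendsto (fun x : ℝ => (x - α) ^ 2 * (-(1/2) : ℝ)) Filter.atTop Filter.atBot :=
        h3.atTop_mul_const_of_neg (by norm_num)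
      convert h4 using 2
      ring
    have h5 := (Real.tendsto_exp_atBot.comp h1).neg
    simpa using h5
  have hint : IntegrableOn g (Ioi β) :=
    integrableOn_Ioi_deriv_of_nonneg' hderiv gpos htend
  have hval : ∫ x in Ioi β, g x = Real.exp (-(β - α) ^ 2 / 2) := by
    rw [integral_Ioi_of_hasDerivAt_of_nonneg' hderiv gpos htend]
    simp [hG]
  -- pointwise bound
  have hbound : ∀ x ∈ Ioi β,
      x * Real.exp (-(x ^ 2 + α ^ 2) / 2) * besselI0 (α * x) ≤ c * g x := by
    intro x hx
    simp only [mem_Ioi] at hx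
    have hx0 : 0 < x := hβ.trans hx
    have h1 : besselI0 (α * x) ≤ Real.exp (α * x) :=
      besselI0_le_exp (mul_nonneg hα hx0.le)
    have h2 : x * Real.exp (-(x ^ 2 + α ^ 2) / 2) * besselI0 (α * x)
        ≤ x * Real.exp (-(x ^ 2 + α ^ 2) / 2) * Real.exp (α * x) :=
      mul_le_mul_of_nonneg_left h1 (by positivity)
    have h3 : x * Real.exp (-(x ^ 2 + α ^ 2) / 2) * Real.exp (α * x)
        = x * Real.exp (-(x - α) ^ 2 / 2) := by
      rw [mul_assoc, ← Real.exp_add]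
      ring_nf
    have h4 : x ≤ c * (x - α) := by
      rw [hc, div_mul_eq_mul_div, le_div_iff₀ hba]
      nlinarith
    have h5 : x * Real.exp (-(x - α) ^ 2 / 2) ≤ c * (x - α) * Real.exp (-(x - α) ^ 2 / 2) :=
      mul_le_mul_of_nonneg_right h4 (Real.exp_nonneg _)
    calc x * Real.exp (-(x ^ 2 + α ^ 2) / 2) * besselI0 (α * x)
        ≤ x * Real.exp (-(x - α) ^ 2 / 2) := by rw [← h3]; exact h2
      _ ≤ c * (x - α) * Real.exp (-(x - α) ^ 2 / 2) := h5
      _ = c * g x := by rw [hg]; ring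
  have hnonneg : ∀ x ∈ Ioi β,
      0 ≤ x * Real.exp (-(x ^ 2 + α ^ 2) / 2) * besselI0 (α * x) := by
    intro x hx
    simp only [mem_Ioi] at hx
    have hx0 : 0 < x := hβ.trans hx
    exact mul_nonneg (by positivity) (besselI0_nonneg _)
  have hmono : marcumQ1 α β ≤ ∫ x in Ioi β, c * g x := by
    unfold marcumQ1
    apply integral_mono_of_nonneg
    · exact (ae_restrict_iff' measurableSet_Ioi).2 (Filter.Eventually.of_forall hnonneg)
    · exact (hint.const_mul c)
    · exact (ae_restrict_iff' measurableSet_Ioi).2 (Filter.Eventually.of_forall hbound)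
  calc marcumQ1 α β ≤ ∫ x in Ioi β, c * g x := hmono
    _ = c * ∫ x in Ioi β, g x := integral_const_mul c g
    _ = c * Real.exp (-(β - α) ^ 2 / 2) := by rw [hval]
end

section
/- Let K ≥ 0 and define the Rician density on ℂ by f_K(h) = ((K+1)/π) · exp(−(K+1)·|h − √(K/(K+1))|²). Then for all a, b ∈ ℂ and every real t ≥ 0, ∫_ℂ ∫_ℂ exp(−t·|a·h_A + b·h_B|²) · f_K(h_A) · f_K(h_B) dh_A dh_B = ((K+1)/(K+1 + t·(|a|² + |b|²))) · exp(−K·t·|a + b|²/(K+1 + t·(|a|² + |b|²))). -/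
open MeasureTheory Set

lemma gaussA (l : ℝ) (hl : 0 < l) :
    (∫ z : ℂ, Real.exp (-l * ‖z‖ ^ 2)) = Real.pi / l := by
  have h := Complex.volume_preserving_equiv_real_prod.symm
  rw [← h.integral_comp Complex.measurableEquivRealProd.symm.measurableEmbedding]
  have : ∀ p : ℝ × ℝ,
      Real.exp (-l * ‖Complex.measurableEquivRealProd.symm p‖ ^ 2)
        = Real.exp (-l * p.1 ^ 2) * Real.exp (-l * p.2 ^ 2) := by
    intro p
    rw [← Real.exp_add, Complex.sq_norm, Complex.normSq_apply]
    simp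
    ring_nf
  simp_rw [this]
  rw [Measure.volume_eq_prod ℝ ℝ,
    integral_prod_mul (f := fun x : ℝ => Real.exp (-l * x ^ 2))
      (g := fun x : ℝ => Real.exp (-l * x ^ 2)), integral_gaussian,
    Real.mul_self_sqrt (by positivity)]

lemma gaussB (l : ℝ) (hl : 0 < l) (q : ℂ) :
    (∫ z : ℂ, Real.exp (-l * ‖z - q‖ ^ 2)) = Real.pi / l := by
  rw [integral_sub_right_eq_self (fun z => Real.exp (-l * ‖z‖ ^ 2)) q]
  exact gaussA l hl

lemma poly_key (s c : ℝ) (w v m h : ℂ) :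
    (c + s * Complex.normSq w) *
        (s * Complex.normSq (w * h + v) + c * Complex.normSq (h - m)) =
      Complex.normSq (((c + s * Complex.normSq w : ℝ) : ℂ) * h -
          ((c : ℂ) * m - (s : ℂ) * (starRingEnd ℂ) w * v)) +
        s * c * Complex.normSq (w * m + v) := by
  simp only [Complex.normSq_apply, Complex.mul_re, Complex.mul_im, Complex.add_re,
    Complex.add_im, Complex.sub_re, Complex.sub_im, Complex.ofReal_re, Complex.ofReal_im,
    Complex.conj_re, Complex.conj_im]
  ring

lemma gaussC (s c : ℝ) (hs : 0 ≤ s) (hc : 0 < c) (w v m : ℂ) :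
    (∫ h : ℂ, Real.exp (-s * ‖w * h + v‖ ^ 2) *
        ((c / Real.pi) * Real.exp (-c * ‖h - m‖ ^ 2))) =
      (c / (c + s * ‖w‖ ^ 2)) *
        Real.exp (-(s * c) * ‖w * m + v‖ ^ 2 /
          (c + s * ‖w‖ ^ 2)) := by
  set L : ℝ := c + s * ‖w‖ ^ 2 with hLdef
  have hL : 0 < L := by positivity
  have hLne : L ≠ 0 := ne_of_gt hL
  have hLCne : (L : ℂ) ≠ 0 := by exact_mod_cast hLne
  set P : ℂ := (c : ℂ) * m - (s : ℂ) * (starRingEnd ℂ) w * v with hP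
  set q : ℂ := P / (L : ℂ) with hq
  have hpt : ∀ h : ℂ,
      Real.exp (-s * ‖w * h + v‖ ^ 2) *
        ((c / Real.pi) * Real.exp (-c * ‖h - m‖ ^ 2)) =
      ((c / Real.pi) * Real.exp (-(s * c) * ‖w * m + v‖ ^ 2 / L)) *
        Real.exp (-L * ‖h - q‖ ^ 2) := by
    intro h
    have hC : Complex.normSq ((L : ℂ) * h - P) = L ^ 2 * Complex.normSq (h - q) := by
      have h1 : (L : ℂ) * h - P = (L : ℂ) * (h - q) := by
        rw [hq]; field_simp
      rw [h1, Complex.normSq_mul, Complex.normSq_ofReal]; ring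
    have hE : s * Complex.normSq (w * h + v) + c * Complex.normSq (h - m) =
        L * Complex.normSq (h - q) + s * c * Complex.normSq (w * m + v) / L := by
      have hp := poly_key s c w v m h
      rw [← Complex.sq_norm w] at hp
      rw [← hLdef] at hp
      field_simp
      nlinarith [hp, hC]
    simp only [Complex.sq_norm]
    rw [mul_comm (Real.exp _), mul_assoc, ← Real.exp_add, mul_assoc, ← Real.exp_add]
    congr 1
    apply congrArg Real.exp
    field_simp at hE ⊢
    linarith [hE]
  simp_rw [hpt]
  rw [integral_const_mul, gaussB L hL q]
  have hpi := Real.pi_ne_zero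
  field_simp


/-- The Rician density with Rician factor `K` on `ℂ`:
`f_K(h) = ((K+1)/π) exp(−(K+1)|h − √(K/(K+1))|²)`. -/
noncomputable def ricianDensity (K : ℝ) (h : ℂ) : ℝ :=
  ((K + 1) / Real.pi) *
    Real.exp (-(K + 1) * (‖h - (Real.sqrt (K / (K + 1)) : ℂ)‖) ^ 2)

/-- exact Chernoff-type Gaussian–Rician double integral, making
equation (8) of the paper precise: for `K ≥ 0`, `a b : ℂ` and `t ≥ 0`,
`∫∫ exp(−t|a h_A + b h_B|²) f_K(h_A) f_K(h_B) dh_A dh_B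
  = ((K+1)/(K+1+t(|a|²+|b|²))) exp(−K t |a+b|²/(K+1+t(|a|²+|b|²)))`. -/
theorem rician_double_gaussian_integral (K : ℝ) (hK : 0 ≤ K) (a b : ℂ)
    (t : ℝ) (ht : 0 ≤ t) :
    (∫ hA : ℂ, ∫ hB : ℂ,
        Real.exp (-t * (‖a * hA + b * hB‖) ^ 2) *
          ricianDensity K hA * ricianDensity K hB) =
      ((K + 1) / (K + 1 + t * ((‖a‖) ^ 2 + (‖b‖) ^ 2))) *
        Real.exp (-K * t * (‖a + b‖) ^ 2 /
          (K + 1 + t * ((‖a‖) ^ 2 + (‖b‖) ^ 2))) := by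
  have hc : (0:ℝ) < K + 1 := by linarith
  set m : ℝ := Real.sqrt (K / (K + 1)) with hm
  have hm0 : 0 ≤ m := Real.sqrt_nonneg _
  have hm2 : m ^ 2 = K / (K + 1) := Real.sq_sqrt (by positivity)
  set D : ℝ := K + 1 + t * ‖b‖ ^ 2 with hD
  have hDpos : 0 < D := by positivity
  set s' : ℝ := t * (K + 1) / D with hs'
  have hs'0 : 0 ≤ s' := by positivity
  set E : ℝ := K + 1 + t * (‖a‖ ^ 2 + ‖b‖ ^ 2) with hE
  have hEpos : 0 < E := by positivity
  have inner : ∀ hA : ℂ,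
      (∫ hB : ℂ, Real.exp (-t * ‖a * hA + b * hB‖ ^ 2) *
          ricianDensity K hA * ricianDensity K hB)
        = ((K + 1) / D) *
            (Real.exp (-s' * ‖a * hA + b * (m:ℂ)‖ ^ 2) * ricianDensity K hA) := by
    intro hA
    have h1 : ∀ hB : ℂ,
        Real.exp (-t * ‖a * hA + b * hB‖ ^ 2) *
            ricianDensity K hA * ricianDensity K hB
          = (Real.exp (-t * ‖b * hB + a * hA‖ ^ 2) *
              (((K + 1) / Real.pi) *
                Real.exp (-(K + 1) * ‖hB - (m:ℂ)‖ ^ 2))) *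
              ricianDensity K hA := by
      intro hB
      rw [hm, add_comm (a * hA) (b * hB)]
      simp only [ricianDensity]
      ring
    simp_rw [h1]
    rw [integral_mul_const, gaussC t (K + 1) ht hc b (a * hA) (m:ℂ)]
    have h2 : -(t * (K + 1)) * ‖b * (m:ℂ) + a * hA‖ ^ 2 /
        (K + 1 + t * ‖b‖ ^ 2)
        = -s' * ‖a * hA + b * (m:ℂ)‖ ^ 2 := by
      rw [add_comm (b * (m:ℂ)) (a * hA), hs']
      field_simp
      rw [hD]
    rw [h2, mul_assoc]
  simp_rw [inner]
  rw [integral_const_mul]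
  have h3 : ∀ hA : ℂ,
      Real.exp (-s' * ‖a * hA + b * (m:ℂ)‖ ^ 2) * ricianDensity K hA
        = Real.exp (-s' * ‖a * hA + b * (m:ℂ)‖ ^ 2) *
            (((K + 1) / Real.pi) *
              Real.exp (-(K + 1) * ‖hA - (m:ℂ)‖ ^ 2)) := by
    intro hA
    rw [hm]
    simp only [ricianDensity]
  simp_rw [h3]
  rw [gaussC s' (K + 1) hs'0 hc a (b * (m:ℂ)) (m:ℂ)]
  have habs : ‖a * (m:ℂ) + b * (m:ℂ)‖ ^ 2
      = m ^ 2 * ‖a + b‖ ^ 2 := by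
    rw [show a * (m:ℂ) + b * (m:ℂ) = (a + b) * (m:ℂ) by ring, norm_mul,
      Complex.norm_real, Real.norm_eq_abs, abs_of_nonneg hm0]
    ring
  have hD2 : K + 1 + s' * ‖a‖ ^ 2 = (K + 1) * E / D := by
    rw [hs', hE, hD]
    field_simp
    ring
  rw [habs, hD2, hm2]
  have hXY : -(s' * (K + 1)) * (K / (K + 1) * ‖a + b‖ ^ 2) / ((K + 1) * E / D)
      = -K * t * ‖a + b‖ ^ 2 / E := by
    rw [hs']
    field_simp
  rw [hXY, ← mul_assoc]
  have hconst : (K + 1) / D * ((K + 1) / ((K + 1) * E / D)) = (K + 1) / E := by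
    field_simp
  rw [hconst]
end

section
/- Let K ≥ 0 and define the Rician density on ℂ by f_K(h) = ((K+1)/π) · exp(−(K+1)·|h − √(K/(K+1))|²). Let a, b ∈ ℂ with |a|² + |b|² > 0. Then lim_{ρ → ∞} ρ · ∫_ℂ ∫_ℂ exp(−(ρ/4)·|a·h_A + b·h_B|²) · f_K(h_A) · f_K(h_B) dh_A dh_B = (4·(K+1)/(|a|² + |b|²)) · exp(−K·|a + b|²/(|a|² + |b|²)). In particular, without adaptive network coding the pairwise error events decay as SNR^{−1}, with a constant proportional to exp(−K·|a + b|²/(|a|² + |b|²)). -/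
open MeasureTheory Set Filter

private lemma gauss_shift (α : ℝ) (hα : 0 < α) (p : ℂ) :
    ∫ h : ℂ, Real.exp (-α * ‖h - p‖ ^ 2) = Real.pi / α := by
  rw [integral_sub_right_eq_self (fun h : ℂ => Real.exp (-α * ‖h‖ ^ 2)) p]
  have := GaussianFourier.integral_rexp_neg_mul_sq_norm (V := ℂ) hα
  simp only [Complex.finrank_real_complex] at this
  rw [this]
  norm_num

private lemma poly_id (c t : ℝ) (w z m h : ℂ) :
    (c * ‖w‖ ^ 2 + t) * (c * ‖z + w * h‖ ^ 2 + t * ‖h - m‖ ^ 2)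
      = ‖((c * ‖w‖ ^ 2 + t : ℝ) : ℂ) * h
          - ((t : ℂ) * m - (c : ℂ) * (starRingEnd ℂ w) * z)‖ ^ 2
        + c * t * ‖z + w * m‖ ^ 2 := by
  simp only [Complex.sq_norm, Complex.normSq_apply, Complex.add_re, Complex.add_im,
    Complex.sub_re, Complex.sub_im, Complex.mul_re, Complex.mul_im, Complex.ofReal_re,
    Complex.ofReal_im, Complex.conj_re, Complex.conj_im]
  ring

private lemma gauss_lin (c t : ℝ) (hc : 0 ≤ c) (ht : 0 < t) (w z m : ℂ) :
    ∫ h : ℂ, Real.exp (-c * ‖z + w * h‖ ^ 2) * Real.exp (-t * ‖h - m‖ ^ 2)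
      = Real.pi / (c * ‖w‖ ^ 2 + t) *
          Real.exp (-(c * t) * ‖z + w * m‖ ^ 2 / (c * ‖w‖ ^ 2 + t)) := by
  set α := c * ‖w‖ ^ 2 + t with hα_def
  have hα : 0 < α := add_pos_of_nonneg_of_pos (mul_nonneg hc (sq_nonneg _)) ht
  set u : ℂ := (t : ℂ) * m - (c : ℂ) * (starRingEnd ℂ w) * z with hu_def
  have key : ∀ h : ℂ,
      Real.exp (-c * ‖z + w * h‖ ^ 2) * Real.exp (-t * ‖h - m‖ ^ 2)
        = Real.exp (-α * ‖h - u / (α : ℂ)‖ ^ 2) *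
            Real.exp (-(c * t) * ‖z + w * m‖ ^ 2 / α) := by
    intro h
    rw [← Real.exp_add, ← Real.exp_add]
    congr 1
    have h2 : ‖h - u / (α : ℂ)‖ ^ 2 = ‖(α : ℂ) * h - u‖ ^ 2 / α ^ 2 := by
      rw [eq_div_iff (by positivity)]
      rw [show (α : ℂ) * h - u = (α : ℂ) * (h - u / (α : ℂ)) by
        rw [mul_sub, mul_div_cancel₀ _ (by exact_mod_cast hα.ne')]]
      rw [norm_mul, Complex.norm_real, Real.norm_of_nonneg hα.le, mul_pow]; ring
    have hpoly := poly_id c t w z m h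
    rw [← hα_def, ← hu_def] at hpoly
    rw [h2]
    rw [show ‖(α : ℂ) * h - u‖ ^ 2 = α * (c * ‖z + w * h‖ ^ 2 + t * ‖h - m‖ ^ 2) - c * t * ‖z + w * m‖ ^ 2 by linarith]
    have hα0 : α ≠ 0 := hα.ne'
    field_simp
    ring
  simp_rw [key]
  rw [integral_mul_const, gauss_shift α hα (u / (α : ℂ))]

/-- high-SNR form of equation (8) of the paper; without adaptive
network coding the pairwise error events decay as `SNR⁻¹` with Rician-factor
dependence `exp(−K|a+b|²/(|a|²+|b|²))`. -/
theorem rician_pairwise_error_snr_inv_limit (K : ℝ) (hK : 0 ≤ K) (a b : ℂ)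
    (hab : 0 < (‖a‖) ^ 2 + (‖b‖) ^ 2) :
    Tendsto (fun ρ : ℝ =>
        ρ * ∫ hA : ℂ, ∫ hB : ℂ,
          Real.exp (-(ρ / 4) * (‖a * hA + b * hB‖) ^ 2) *
            ricianDensity K hA * ricianDensity K hB)
      atTop
      (nhds ((4 * (K + 1) / ((‖a‖) ^ 2 + (‖b‖) ^ 2)) *
        Real.exp (-K * (‖a + b‖) ^ 2 /
          ((‖a‖) ^ 2 + (‖b‖) ^ 2)))) := by
  have hπ := Real.pi_pos
  set t := K + 1 with ht_def
  have ht : 0 < t := by simp only [ht_def]; linarith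
  set m : ℂ := (Real.sqrt (K / (K + 1)) : ℂ) with hm_def
  set s := (‖a‖) ^ 2 + (‖b‖) ^ 2 with hs_def
  set A := (‖a + b‖) ^ 2 with hA_def
  have hs : 0 < s := hab
  have hm2 : ‖m‖ ^ 2 = K / (K + 1) := by
    rw [hm_def, Complex.norm_real, Real.norm_eq_abs, sq_abs, Real.sq_sqrt (by positivity)]
  set G : ℝ → ℝ := fun x => 4 * t / (s + x) * Real.exp (-(K * A) / (s + x)) with hG_def
  have hmain : ∀ ρ : ℝ, 0 < ρ →
      ρ * (∫ hA : ℂ, ∫ hB : ℂ,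
          Real.exp (-(ρ / 4) * (‖a * hA + b * hB‖) ^ 2) *
            ricianDensity K hA * ricianDensity K hB) = G (4 * t / ρ) := by
    intro ρ hρ
    set c := ρ / 4 with hc_def
    have hcpos : 0 < c := by rw [hc_def]; linarith
    set αB := c * ‖b‖ ^ 2 + t with hαB_def
    have hαB : 0 < αB := add_pos_of_nonneg_of_pos (mul_nonneg hcpos.le (sq_nonneg _)) ht
    have hinner : ∀ hA : ℂ,
        (∫ hB : ℂ, Real.exp (-c * (‖a * hA + b * hB‖) ^ 2) *
            ricianDensity K hA * ricianDensity K hB)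
          = (ricianDensity K hA * (t / Real.pi)) *
              (Real.pi / αB *
                Real.exp (-(c * t) * ‖a * hA + b * m‖ ^ 2 / αB)) := by
      intro hA
      have e1 : ∀ hB : ℂ,
          Real.exp (-c * (‖a * hA + b * hB‖) ^ 2) *
              ricianDensity K hA * ricianDensity K hB
            = (ricianDensity K hA * (t / Real.pi)) *
                (Real.exp (-c * ‖a * hA + b * hB‖ ^ 2) *
                  Real.exp (-t * ‖hB - m‖ ^ 2)) := by
        intro hB
        simp only [ricianDensity, ← ht_def, ← hm_def]
        ring
      simp_rw [e1]
      rw [integral_const_mul, gauss_lin c t hcpos.le ht b (a * hA) m, ← hαB_def]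
    simp_rw [hinner]
    set c2 := c * t / αB with hc2_def
    have hc2 : 0 < c2 := div_pos (mul_pos hcpos ht) hαB
    set αA := c2 * ‖a‖ ^ 2 + t with hαA_def
    have hαA : 0 < αA := add_pos_of_nonneg_of_pos (mul_nonneg hc2.le (sq_nonneg _)) ht
    have e2 : ∀ hA : ℂ,
        (ricianDensity K hA * (t / Real.pi)) *
            (Real.pi / αB * Real.exp (-(c * t) * ‖a * hA + b * m‖ ^ 2 / αB))
          = ((t / Real.pi) * (t / Real.pi) * (Real.pi / αB)) *
              (Real.exp (-c2 * ‖b * m + a * hA‖ ^ 2) *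
                Real.exp (-t * ‖hA - m‖ ^ 2)) := by
      intro hA
      have harg : -(c * t) * ‖a * hA + b * m‖ ^ 2 / αB
          = -c2 * ‖b * m + a * hA‖ ^ 2 := by
        rw [add_comm (a * hA), hc2_def]; ring
      rw [harg]
      simp only [ricianDensity, ← ht_def, ← hm_def]
      ring
    simp_rw [e2]
    rw [integral_const_mul, gauss_lin c2 t hc2.le ht a (b * m) m, ← hαA_def]
    have habs : ‖b * m + a * m‖ ^ 2 = K / (K + 1) * A := by
      rw [show b * m + a * m = (a + b) * m by ring, norm_mul, mul_pow, hm2, hA_def]; ring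
    rw [habs]
    have hρc : ρ = 4 * c := by rw [hc_def]; ring
    have n1 : c * ‖b‖ ^ 2 + t ≠ 0 := hαB.ne'
    have n2 : c * t / (c * ‖b‖ ^ 2 + t) * ‖a‖ ^ 2 + t ≠ 0 := hαA.ne'
    have n3 : t ≠ 0 := ht.ne'
    have n4 : c ≠ 0 := hcpos.ne'
    have n5 : K + 1 ≠ 0 := by rw [← ht_def]; exact ht.ne'
    have n6 : Real.pi ≠ 0 := hπ.ne'
    have hden : s + 4 * t / ρ ≠ 0 := by
      have : 0 < 4 * t / ρ := by positivity
      positivity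
    have harg2 : -(c2 * t) * (K / (K + 1) * A) / αA = -(K * A) / (s + 4 * t / ρ) := by
      rw [hαA_def, hc2_def, hαB_def, ← ht_def, hρc, hs_def]
      field_simp
      ring
    rw [harg2]
    simp only [hG_def]
    have hpre : ρ * ((t / Real.pi) * (t / Real.pi) * (Real.pi / αB) * (Real.pi / αA))
        = 4 * t / (s + 4 * t / ρ) := by
      rw [hαA_def, hc2_def, hαB_def, hρc, hs_def]
      field_simp
      ring
    linear_combination Real.exp (-(K * A) / (s + 4 * t / ρ)) * hpre
  have h1 : Tendsto (fun ρ : ℝ => 4 * t / ρ) atTop (nhds 0) :=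
    tendsto_const_nhds.div_atTop tendsto_id
  have hc1 : ContinuousAt (fun x : ℝ => s + x) 0 := by fun_prop
  have hne : (fun x : ℝ => s + x) 0 ≠ 0 := by simpa using hs.ne'
  have h3 : ContinuousAt (fun x : ℝ => Real.exp (-(K * A) / (s + x))) 0 :=
    Real.continuous_exp.continuousAt.comp (continuousAt_const.div hc1 hne)
  have h2 : ContinuousAt G 0 := (continuousAt_const.div hc1 hne).mul h3
  have h4 : Tendsto (fun ρ => G (4 * t / ρ)) atTop (nhds (G 0)) := h2.tendsto.comp h1
  have hG0 : G 0 = 4 * t / s * Real.exp (-K * A / s) := by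
    simp only [hG_def, add_zero, neg_mul]
  rw [show (4 * t / s * Real.exp (-K * A / s)) = G 0 from hG0.symm]
  refine Tendsto.congr' ?_ h4
  filter_upwards [eventually_gt_atTop 0] with ρ hρ using (hmain ρ hρ).symm
end

section
/- Let K ≥ 0 with Rician density f_K(h) = ((K+1)/π) · exp(−(K+1)·|h − √(K/(K+1))|²) on ℂ. Fix h_A ∈ ℂ, s' ∈ ℂ, reals t > 0 and δ > 0, and set c = h_A·s' + √(K/(K+1)) and R = K + 1 + t. If δ·|h_A| > (K+1)·|c|/R, then ∫_{{h_B ∈ ℂ : |h_B + h_A·s'| ≥ δ·|h_A|}} exp(−t·|h_B + h_A·s'|²) · f_K(h_B) dh_B ≤ ((K+1)/R) · (δ·|h_A|/(δ·|h_A| − (K+1)·|c|/R)) · exp(−R·(δ·|h_A| − (K+1)·|c|/R)²) · exp(−t·(K+1)·|c|²/R). -/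
open MeasureTheory Set

section AuxRician

open Filter

/-- Integrability of a Gaussian on `ℂ`. -/
lemma rician_aux_gauss_integrable (β : ℝ) (hβ : 0 < β) :
    Integrable (fun x : ℂ => Real.exp (-β * ‖x‖ ^ 2)) := by
  have h := GaussianFourier.integrable_cexp_neg_mul_sq_norm_add (V := ℂ) (b := (β : ℂ))
    (by simpa using hβ) 0 0
  have h2 := h.re
  refine h2.congr (Filter.Eventually.of_forall fun x => ?_)
  simp only [zero_mul, add_zero, RCLike.re_to_complex]
  rw [show (-(β:ℂ) * (‖x‖:ℂ)^2) = ((-β * ‖x‖^2 : ℝ) : ℂ) by push_cast; ring]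
  exact Complex.exp_ofReal_re _

/-- Polar-coordinate formula for radial integrals on `ℂ`. -/
lemma rician_aux_radial (f : ℝ → ℝ) :
    ∫ x : ℂ, f ‖x‖ = 2 * Real.pi * ∫ y in Ioi (0:ℝ), y * f y := by
  rw [MeasureTheory.integral_fun_norm_addHaar (volume : Measure ℂ) f]
  simp [Complex.finrank_real_complex, Complex.volume_ball, smul_eq_mul, mul_assoc, measureReal_def]

lemma rician_aux_deriv (R b : ℝ) (hR : 0 < R) (y : ℝ) :
    HasDerivAt (fun y : ℝ => -(Real.exp (-R * (y - b) ^ 2) / (2 * R)))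
      ((y - b) * Real.exp (-R * (y - b) ^ 2)) y := by
  have h1 : HasDerivAt (fun y : ℝ => -R * (y - b) ^ 2) (-R * (2 * (y - b))) y := by
    have := (((hasDerivAt_id y).sub_const b).pow 2).const_mul (-R)
    simpa using this
  have h2 := (h1.exp.div_const (2 * R)).neg
  refine h2.congr_deriv ?_
  field_simp

lemma rician_aux_tendsto (R b : ℝ) (hR : 0 < R) :
    Tendsto (fun y : ℝ => -(Real.exp (-R * (y - b) ^ 2) / (2 * R))) atTop (nhds 0) := by
  have h1 : Tendsto (fun y : ℝ => -R * (y - b) ^ 2) atTop atBot := by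
    have h2 : Tendsto (fun y : ℝ => (y - b) ^ 2) atTop atTop := by
      have := (tendsto_pow_atTop two_ne_zero).comp
        (tendsto_atTop_add_const_right atTop (-b) (tendsto_id (α := ℝ)))
      simpa [Function.comp_def, sub_eq_add_neg] using this
    exact h2.const_mul_atTop_of_neg (by linarith)
  have := (Real.tendsto_exp_atBot.comp h1).div_const (2 * R)
  simpa using this.neg

lemma rician_aux_tail (R b r : ℝ) (hR : 0 < R) (hbr : b < r) :
    IntegrableOn (fun y => (y - b) * Real.exp (-R * (y - b) ^ 2)) (Ioi r) ∧
    ∫ y in Ioi r, (y - b) * Real.exp (-R * (y - b) ^ 2)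
      = Real.exp (-R * (r - b) ^ 2) / (2 * R) := by
  have hderiv : ∀ x ∈ Ici r, HasDerivAt (fun y : ℝ => -(Real.exp (-R * (y - b) ^ 2) / (2 * R)))
      ((x - b) * Real.exp (-R * (x - b) ^ 2)) x := fun x _ => rician_aux_deriv R b hR x
  have hpos : ∀ x ∈ Ioi r, 0 ≤ (x - b) * Real.exp (-R * (x - b) ^ 2) := fun x hx =>
    mul_nonneg (by have := mem_Ioi.1 hx; linarith) (Real.exp_nonneg _)
  refine ⟨MeasureTheory.integrableOn_Ioi_deriv_of_nonneg' hderiv hpos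
    (rician_aux_tendsto R b hR), ?_⟩
  rw [MeasureTheory.integral_Ioi_of_hasDerivAt_of_nonneg' hderiv hpos (rician_aux_tendsto R b hR)]
  ring

/-- Completing the square in the exponent. -/
lemma rician_aux_exponent (K t R : ℝ) (hK : 0 ≤ K) (ht : 0 < t) (hR : R = K + 1 + t) (x c : ℂ) :
    -t * (‖x‖)^2 + -(K+1) * (‖x - c‖)^2
      = -R * (‖x - (((K+1)/R : ℝ) * c : ℂ)‖)^2
        + -(t * (K+1) * (‖c‖)^2 / R) := by
  have hRpos : (0:ℝ) < R := by rw [hR]; linarith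
  have hRne : R ≠ 0 := ne_of_gt hRpos
  simp only [Complex.sq_norm, Complex.normSq_apply, Complex.sub_re, Complex.sub_im,
    Complex.mul_re, Complex.mul_im, Complex.ofReal_re, Complex.ofReal_im]
  subst hR
  field_simp
  ring

end AuxRician

set_option maxHeartbeats 1000000 in
/-- (the inner-integral upper bound, equation (16) in the proof of
Theorem 1 of the paper, with corrected constants), where `c = h_A s' + √(K/(K+1))`
and `R = K + 1 + t`, assuming `δ|h_A| > (K+1)|c|/R`. -/
theorem rician_inner_integral_upper_bound
    (K : ℝ) (hK : 0 ≤ K) (hA : ℂ) (s' : ℂ) (t δ : ℝ) (ht : 0 < t) (hδ : 0 < δ)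
    (c : ℂ) (hc : c = hA * s' + (Real.sqrt (K / (K + 1)) : ℂ))
    (R : ℝ) (hR : R = K + 1 + t)
    (hgap : (K + 1) * ‖c‖ / R < δ * ‖hA‖) :
    (∫ hB in {hB : ℂ | δ * ‖hA‖ ≤ ‖hB + hA * s'‖},
        Real.exp (-t * (‖hB + hA * s'‖) ^ 2) * ricianDensity K hB) ≤
      ((K + 1) / R) *
        (δ * ‖hA‖ /
          (δ * ‖hA‖ - (K + 1) * ‖c‖ / R)) *
        Real.exp (-R * (δ * ‖hA‖ - (K + 1) * ‖c‖ / R) ^ 2) *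
        Real.exp (-t * (K + 1) * (‖c‖) ^ 2 / R) := by
  have hK1 : (0:ℝ) < K + 1 := by linarith
  have hRpos : 0 < R := by rw [hR]; linarith
  have hRne : R ≠ 0 := ne_of_gt hRpos
  set r : ℝ := δ * ‖hA‖ with hr
  set b : ℝ := (K + 1) * ‖c‖ / R with hb
  have hb0 : 0 ≤ b := by
    rw [hb]; positivity
  have hbr : b < r := hgap
  have hrpos : 0 < r := lt_of_le_of_lt hb0 hbr
  have ha : 0 < r - b := by linarith
  set v : ℂ := hA * s' with hv
  set c' : ℂ := (((K + 1) / R : ℝ) : ℂ) * c with hc'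
  have habsc' : ‖c'‖ = b := by
    rw [hc', norm_mul, Complex.norm_real, Real.norm_eq_abs, abs_of_nonneg (by positivity), hb]; ring
  set D : ℝ := t * (K + 1) * (‖c‖) ^ 2 / R with hD
  set H : ℂ → ℝ := fun x =>
    ((K + 1) / Real.pi) * Real.exp (-R * (‖x - c'‖) ^ 2) * Real.exp (-D) with hH
  set T : Set ℂ := {x : ℂ | r ≤ ‖x‖} with hT
  have hTm : MeasurableSet T :=
    (isClosed_le continuous_const continuous_norm).measurableSet
  -- Step 1: pointwise identity and translation
  have hFH : ∀ hB : ℂ,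
      Real.exp (-t * (‖hB + v‖) ^ 2) * ricianDensity K hB = H (hB + v) := by
    intro hB
    have h1 : hB - ((Real.sqrt (K / (K + 1)) : ℝ) : ℂ) = (hB + v) - c := by
      rw [hc]; ring
    rw [ricianDensity, h1, hH]
    rw [mul_comm ((K + 1) / Real.pi) _, ← mul_assoc, ← Real.exp_add,
      rician_aux_exponent K t R hK ht hR (hB + v) c, Real.exp_add]
    ring
  have hSeq : {hB : ℂ | δ * ‖hA‖ ≤ ‖hB + hA * s'‖}
      = (fun hB : ℂ => hB + v) ⁻¹' T := rfl
  have hSm : MeasurableSet ((fun hB : ℂ => hB + v) ⁻¹' T) :=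
    hTm.preimage (measurable_id.add_const v)
  have step1 : (∫ hB in {hB : ℂ | δ * ‖hA‖ ≤ ‖hB + hA * s'‖},
        Real.exp (-t * (‖hB + hA * s'‖) ^ 2) * ricianDensity K hB)
      = ∫ x : ℂ, T.indicator H x := by
    rw [hSeq, ← integral_indicator hSm,
      ← MeasureTheory.integral_add_right_eq_self (T.indicator H) v]
    congr 1
    ext hB
    rw [← Set.indicator_comp_right (fun hB : ℂ => hB + v) (s := T) (g := H) (x := hB)]
    by_cases h : hB ∈ (fun hB : ℂ => hB + v) ⁻¹' T
    · rw [indicator_of_mem h, indicator_of_mem h]; exact hFH hB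
    · rw [indicator_of_notMem h, indicator_of_notMem h]
  -- the radial dominating function
  set f : ℝ → ℝ := fun y =>
    if r ≤ y then (y - b) / y * Real.exp (-R * (y - b) ^ 2) else 0 with hf
  set Cst : ℝ := ((K + 1) / Real.pi) * Real.exp (-D) * (r / (r - b)) with hCst
  have hCst0 : 0 ≤ Cst := by
    rw [hCst]
    have := Real.pi_pos
    positivity
  -- pointwise bound
  have hbound : ∀ x : ℂ, T.indicator H x ≤ Cst * f ‖x‖ := by
    intro x
    by_cases hx : x ∈ T
    · rw [indicator_of_mem hx]
      have hxr : r ≤ ‖x‖ := hx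
      have hxn : r ≤ ‖x‖ := by exact hx
      have hx0 : 0 < ‖x‖ := lt_of_lt_of_le hrpos hxn
      have htri : ‖x‖ - b ≤ ‖x - c'‖ := by
        have h := norm_sub_norm_le x c'
        rw [habsc'] at h
        exact h
      have hxb : 0 ≤ ‖x‖ - b := by linarith
      have hsq : (‖x‖ - b) ^ 2 ≤ (‖x - c'‖) ^ 2 := by
        exact pow_le_pow_left₀ hxb htri 2
      have e1 : Real.exp (-R * (‖x - c'‖) ^ 2)
          ≤ Real.exp (-R * (‖x‖ - b) ^ 2) := by
        apply Real.exp_le_exp.2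
        nlinarith [hRpos.le]
      have h2 : 1 ≤ r / (r - b) * ((‖x‖ - b) / ‖x‖) := by
        rw [div_mul_div_comm, le_div_iff₀ (mul_pos ha hx0)]
        nlinarith
      have e2 : Real.exp (-R * (‖x‖ - b) ^ 2)
          ≤ r / (r - b) * ((‖x‖ - b) / ‖x‖ * Real.exp (-R * (‖x‖ - b) ^ 2)) := by
        have := mul_le_mul_of_nonneg_right h2 (Real.exp_nonneg (-R * (‖x‖ - b) ^ 2))
        calc Real.exp (-R * (‖x‖ - b) ^ 2)
            = 1 * Real.exp (-R * (‖x‖ - b) ^ 2) := (one_mul _).symm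
          _ ≤ r / (r - b) * ((‖x‖ - b) / ‖x‖) * Real.exp (-R * (‖x‖ - b) ^ 2) := this
          _ = r / (r - b) * ((‖x‖ - b) / ‖x‖ * Real.exp (-R * (‖x‖ - b) ^ 2)) := by ring
      have hfx : f ‖x‖ = (‖x‖ - b) / ‖x‖ * Real.exp (-R * (‖x‖ - b) ^ 2) := by
        simp only [hf]; rw [if_pos hxn]
      calc H x = ((K + 1) / Real.pi) * Real.exp (-D)
            * Real.exp (-R * (‖x - c'‖) ^ 2) := by rw [hH]; ring
        _ ≤ ((K + 1) / Real.pi) * Real.exp (-D) * Real.exp (-R * (‖x‖ - b) ^ 2) := by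
            apply mul_le_mul_of_nonneg_left e1
            have := Real.pi_pos
            positivity
        _ ≤ ((K + 1) / Real.pi) * Real.exp (-D)
            * (r / (r - b) * ((‖x‖ - b) / ‖x‖ * Real.exp (-R * (‖x‖ - b) ^ 2))) := by
            apply mul_le_mul_of_nonneg_left e2
            have := Real.pi_pos
            positivity
        _ = Cst * f ‖x‖ := by rw [hfx, hCst]; ring
    · rw [indicator_of_notMem hx]
      have hxn : ¬ r ≤ ‖x‖ := by exact hx
      have : f ‖x‖ = 0 := by simp only [hf]; rw [if_neg hxn]
      rw [this, mul_zero]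
  have hnonneg : ∀ x : ℂ, 0 ≤ T.indicator H x := by
    intro x
    apply indicator_nonneg
    intro y _
    rw [hH]
    have := Real.pi_pos
    positivity
  -- measurability of the dominating function
  have hfmeas : Measurable f := by
    rw [hf]
    apply Measurable.ite (measurableSet_le measurable_const measurable_id)
    · fun_prop
    · exact measurable_const
  have hGmeas : AEStronglyMeasurable (fun x : ℂ => Cst * f ‖x‖) volume :=
    (((hfmeas.comp measurable_norm)).const_mul Cst).aestronglyMeasurable
  -- integrability of the dominating function
  have hfle : ∀ y : ℝ, 0 ≤ y → f y ≤ Real.exp (R * b ^ 2) * Real.exp (-(R / 2) * y ^ 2) := by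
    intro y hy
    rw [hf]
    by_cases hry : r ≤ y
    · simp only [hry, if_true]
      have hy0 : 0 < y := lt_of_lt_of_le hrpos hry
      have h1 : (y - b) / y ≤ 1 := by
        rw [div_le_one hy0]; linarith
      have h2 : Real.exp (-R * (y - b) ^ 2)
          ≤ Real.exp (R * b ^ 2) * Real.exp (-(R / 2) * y ^ 2) := by
        rw [← Real.exp_add]
        apply Real.exp_le_exp.2
        nlinarith [sq_nonneg (y - 2 * b), hRpos.le]
      calc (y - b) / y * Real.exp (-R * (y - b) ^ 2)
          ≤ 1 * Real.exp (-R * (y - b) ^ 2) :=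
            mul_le_mul_of_nonneg_right h1 (Real.exp_nonneg _)
        _ = Real.exp (-R * (y - b) ^ 2) := one_mul _
        _ ≤ Real.exp (R * b ^ 2) * Real.exp (-(R / 2) * y ^ 2) := h2
    · simp only [hry, if_false]
      positivity
  have hf0 : ∀ y : ℝ, 0 ≤ f y := by
    intro y
    rw [hf]
    by_cases hry : r ≤ y
    · simp only [hry, if_true]
      have hy0 : 0 < y := lt_of_lt_of_le hrpos hry
      have : 0 ≤ y - b := by linarith
      positivity
    · simp [hry]
  have hGint : Integrable (fun x : ℂ => Cst * f ‖x‖) := by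
    apply Integrable.const_mul
    apply Integrable.mono'
      (((rician_aux_gauss_integrable (R / 2) (by linarith)).const_mul
        (Real.exp (R * b ^ 2))))
      (hfmeas.comp measurable_norm).aestronglyMeasurable
    refine Filter.Eventually.of_forall fun x => ?_
    simp only [Function.comp_apply, Real.norm_eq_abs]
    rw [abs_of_nonneg (hf0 _)]
    exact hfle ‖x‖ (norm_nonneg x)
  -- value of the dominating integral
  have htail := rician_aux_tail R b r hRpos hbr
  have hval : (∫ x : ℂ, Cst * f ‖x‖) =
      Cst * (2 * Real.pi * (Real.exp (-R * (r - b) ^ 2) / (2 * R))) := by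
    rw [MeasureTheory.integral_const_mul, rician_aux_radial f]
    congr 2
    have hcongr : ∀ y ∈ Ioi (0:ℝ), y * f y
        = Set.indicator (Ici r) (fun y => (y - b) * Real.exp (-R * (y - b) ^ 2)) y := by
      intro y hy
      have hy0 : 0 < y := mem_Ioi.1 hy
      by_cases hry : r ≤ y
      · rw [Set.indicator_of_mem (mem_Ici.mpr hry)]
        simp only [hf]
        rw [if_pos hry]
        field_simp
      · rw [Set.indicator_of_notMem (by simpa using hry)]
        simp only [hf]
        rw [if_neg hry, mul_zero]
    rw [setIntegral_congr_fun measurableSet_Ioi hcongr,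
      MeasureTheory.setIntegral_indicator measurableSet_Ici]
    have hinter : Ioi (0:ℝ) ∩ Ici r = Ici r := by
      apply inter_eq_right.2
      intro y hy
      exact lt_of_lt_of_le hrpos hy
    rw [hinter, MeasureTheory.integral_Ici_eq_integral_Ioi, htail.2]
  -- put everything together
  rw [step1]
  calc (∫ x : ℂ, T.indicator H x) ≤ ∫ x : ℂ, Cst * f ‖x‖ :=
      integral_mono_of_nonneg (Filter.Eventually.of_forall hnonneg) hGint
        (Filter.Eventually.of_forall hbound)
    _ = Cst * (2 * Real.pi * (Real.exp (-R * (r - b) ^ 2) / (2 * R))) := hval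
    _ = ((K + 1) / R) * (r / (r - b)) * Real.exp (-R * (r - b) ^ 2)
        * Real.exp (-t * (K + 1) * (‖c‖) ^ 2 / R) := by
      rw [hCst]
      have hexp : Real.exp (-D) = Real.exp (-t * (K + 1) * (‖c‖) ^ 2 / R) := by
        congr 1
        rw [hD]; ring
      rw [hexp]
      have hπ : Real.pi ≠ 0 := Real.pi_ne_zero
      field_simp
end
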